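/- arXiv:1411.1536 — 2 statements merged into one kernel-verified Lean document; each statement's English description precedes it below -/
import Mathlib

section
/- Let C and D be two simple closed curves in the plane ℝ² that do not cross each other (i.e. C ∩ D is finite, and the curves never transversally intersect — formally, D does not meet both the bounded and unbounded complementary components of C). If D meets the bounded complementary component of C, then D is entirely contained in the closure of the bounded complementary component of C, and in particular the bounded complementary component of D is contained in the bounded complementary component of C. -/
open Set Complex

noncomputable def Complex.abs : AbsoluteValue ℂ ℝ := IsAbsoluteValue.toAbsoluteValue (norm : ℂ → ℝ)

@[simp] lemma Complex.abs_apply' (z : ℂ) : Complex.abs z = ‖z‖ := rfl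

lemma Complex.norm_eq_abs (z : ℂ) : ‖z‖ = Complex.abs z := rfl

lemma Complex.abs_intCast (m : ℤ) : Complex.abs (m:ℂ) = |(m:ℝ)| := by simp

lemma Complex.abs_two : Complex.abs 2 = 2 := by simp

lemma Complex.abs_ofReal (r : ℝ) : Complex.abs (r:ℂ) = |r| := by simp

lemma Complex.abs_I : Complex.abs I = 1 := by simp

lemma Complex.continuous_abs : Continuous Complex.abs := continuous_norm

lemma Complex.abs_exp (z : ℂ) : Complex.abs (Complex.exp z) = Real.exp z.re := by
  simp [Complex.norm_exp]

private lemma mem_slit_of_near_one {z : ℂ} (h : Complex.abs (z - 1) < 1) :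
    z ∈ Complex.slitPlane := by
  rw [Complex.mem_slitPlane_iff]
  left
  have h1 : |(z - 1).re| ≤ Complex.abs (z - 1) := Complex.abs_re_le_norm _
  have h2 : (z - 1).re = z.re - 1 := by simp
  rw [h2] at h1
  have h3 := abs_lt.mp (lt_of_le_of_lt h1 h)
  linarith [h3.1]

private lemma near_ne_zero {z : ℂ} (h : Complex.abs (z - 1) < 1) : z ≠ 0 := by
  intro hz; rw [hz] at h; simp at h

/-- Continuous logarithm along a (globally defined, nonvanishing) path, valid on `[0,1]`. -/
private lemma exists_log (p : ℝ → ℂ) (hp : Continuous p) (h0 : ∀ t, p t ≠ 0) :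
    ∃ Λ : ℝ → ℂ, Continuous Λ ∧ ∀ t ∈ Icc (0:ℝ) 1, Complex.exp (Λ t) = p t := by
  -- minimum of |p| on [0,1]
  obtain ⟨t₀, ht₀, hmin⟩ := isCompact_Icc.exists_isMinOn (α := ℝ) (s := Icc (0:ℝ) 1)
    (nonempty_Icc.mpr zero_le_one) (hp.comp continuous_id).norm.continuousOn
  set m : ℝ := ‖p t₀‖ with hm
  have hmpos : 0 < m := by simpa [hm] using norm_pos_iff.mpr (h0 t₀)
  have hmle : ∀ t ∈ Icc (0:ℝ) 1, m ≤ ‖p t‖ := fun t ht => hmin ht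
  -- uniform continuity
  have huc : UniformContinuousOn p (Icc 0 1) :=
    isCompact_Icc.uniformContinuousOn_of_continuous hp.continuousOn
  rw [Metric.uniformContinuousOn_iff] at huc
  obtain ⟨δ, hδpos, hδ⟩ := huc m hmpos
  obtain ⟨n, hn⟩ := exists_nat_gt (1/δ)
  have hnpos : 0 < (n:ℝ) := lt_trans (by positivity) hn
  have hn0 : (n:ℝ) ≠ 0 := ne_of_gt hnpos
  have hstep : (1:ℝ)/n < δ := by
    rw [div_lt_iff₀ hnpos]
    calc (1:ℝ) = δ * (1/δ) := by field_simp
    _ < δ * n := by exact mul_lt_mul_of_pos_left hn hδpos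
  -- key: ratios near gridpoints are near 1
  have hratio : ∀ c u : ℝ, c ∈ Icc (0:ℝ) 1 → u ∈ Icc (0:ℝ) 1 → |u - c| ≤ 1/n →
      Complex.abs (p u / p c - 1) < 1 := by
    intro c u hc hu hdist
    have hpc : p c ≠ 0 := h0 c
    have h1 : dist (p u) (p c) < m := by
      apply hδ u hu c hc
      rw [Real.dist_eq]; exact lt_of_le_of_lt hdist hstep
    have h2 : Complex.abs (p u / p c - 1) = Complex.abs (p u - p c) / Complex.abs (p c) := by
      rw [div_sub_one hpc, map_div₀]
    rw [h2, div_lt_one (by simpa using norm_pos_iff.mpr hpc)]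
    calc Complex.abs (p u - p c) = dist (p u) (p c) := by rw [Complex.dist_eq]; rfl
    _ < m := h1
    _ ≤ Complex.abs (p c) := hmle c hc
  -- induction up the grid
  have main : ∀ k : ℕ, k ≤ n → ∃ Λ : ℝ → ℂ, Continuous Λ ∧
      ∀ t ∈ Icc (0:ℝ) ((k:ℝ)/n), Complex.exp (Λ t) = p t := by
    intro k
    induction k with
    | zero =>
      intro _
      refine ⟨fun _ => Complex.log (p 0), continuous_const, ?_⟩
      intro t ht
      have : t = 0 := le_antisymm (by simpa using ht.2) ht.1
      rw [this, Complex.exp_log (h0 0)]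
    | succ k ih =>
      intro hk1
      obtain ⟨Λk, hΛkc, hΛk⟩ := ih (le_trans (Nat.le_succ k) hk1)
      set c : ℝ := (k:ℝ)/n with hc
      set d : ℝ := ((k+1:ℕ):ℝ)/n with hd
      have hkk : (k:ℝ) ≤ ((k+1:ℕ):ℝ) := by push_cast; linarith
      have hcd : c ≤ d := (div_le_div_iff_of_pos_right hnpos).mpr hkk
      have hd1 : d ≤ 1 := by
        rw [hd, div_le_one hnpos]; exact_mod_cast hk1
      have hc0 : 0 ≤ c := by positivity
      have hcIcc : c ∈ Icc (0:ℝ) 1 := ⟨hc0, le_trans hcd hd1⟩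
      set g : ℝ → ℝ := fun t => max (min t d) c with hg
      have hgc : Continuous g := ((continuous_id.min continuous_const).max continuous_const)
      have hgmem : ∀ t, g t ∈ Icc c d := fun t => ⟨le_max_right _ _, max_le (min_le_right _ _) hcd⟩
      have hgIcc : ∀ t, g t ∈ Icc (0:ℝ) 1 :=
        fun t => ⟨le_trans hc0 (hgmem t).1, le_trans (hgmem t).2 hd1⟩
      have hgnear : ∀ t, |g t - c| ≤ 1/n := by
        intro t
        rw [abs_le]
        have hdc : d - c = 1/n := by rw [hd, hc]; push_cast; ring
        constructor
        · linarith [(hgmem t).1, one_div_pos.mpr hnpos]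
        · linarith [(hgmem t).2]
      have hrat : ∀ t, Complex.abs (p (g t) / p c - 1) < 1 :=
        fun t => hratio c (g t) hcIcc (hgIcc t) (hgnear t)
      refine ⟨fun t => Λk (min t c) + Complex.log (p (g t) / p c), ?_, ?_⟩
      · apply Continuous.add (hΛkc.comp (continuous_id.min continuous_const))
        rw [continuous_iff_continuousAt]
        intro t
        exact ContinuousAt.clog ((hp.comp hgc).div continuous_const (fun _ => h0 c)).continuousAt
          (mem_slit_of_near_one (hrat t))
      · intro t ht
        show Complex.exp (Λk (min t c) + Complex.log (p (g t) / p c)) = p t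
        by_cases htc : t ≤ c
        · have h1 : min t c = t := min_eq_left htc
          have h2 : g t = c := by
            rw [hg]; simp only
            rw [min_eq_left (le_trans htc hcd), max_eq_right htc]
          rw [h1, h2, div_self (h0 c), Complex.log_one, add_zero]
          exact hΛk t ⟨ht.1, htc⟩
        · push_neg at htc
          have h1 : min t c = c := min_eq_right htc.le
          have htd : t ≤ d := ht.2
          have h2 : g t = t := by
            rw [hg]; simp only
            rw [min_eq_left htd, max_eq_left htc.le]
          have hne : p t / p c ≠ 0 := by
            have h3 := near_ne_zero (hrat t)
            rwa [h2] at h3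
          rw [h1, h2, Complex.exp_add, Complex.exp_log hne, hΛk c ⟨hc0, le_refl c⟩]
          rw [mul_comm, div_mul_cancel₀ _ (h0 c)]
  obtain ⟨Λ, hΛc, hΛ⟩ := main n le_rfl
  exact ⟨Λ, hΛc, by rwa [div_self hn0] at hΛ⟩

private def Wind (p : ℝ → ℂ) (z : ℂ) : Prop :=
  ∃ Λ : ℝ → ℂ, Continuous Λ ∧ (∀ t ∈ Icc (0:ℝ) 1, Complex.exp (Λ t) = p t) ∧ Λ 1 - Λ 0 = z

private lemma abs_int_two_pi (m : ℤ) :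
    Complex.abs ((m:ℂ) * (2 * (Real.pi:ℂ) * Complex.I)) = |(m:ℝ)| * (2*Real.pi) := by
  rw [map_mul, map_mul, map_mul, Complex.abs_intCast, Complex.abs_two, Complex.abs_ofReal,
    Complex.abs_I, _root_.abs_of_nonneg Real.pi_pos.le, mul_one]

private lemma wind_exists (p : ℝ → ℂ) (hp : Continuous p) (h0 : ∀ t, p t ≠ 0) :
    ∃ z, Wind p z := by
  obtain ⟨Λ, h1, h2⟩ := exists_log p hp h0
  exact ⟨Λ 1 - Λ 0, Λ, h1, h2, rfl⟩

private lemma wind_unique {p : ℝ → ℂ} {z z' : ℂ} (hz : Wind p z) (hz' : Wind p z') : z = z' := by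
  obtain ⟨Λ, hΛc, hΛ, hΛd⟩ := hz
  obtain ⟨Λ', hΛ'c, hΛ', hΛ'd⟩ := hz'
  set d : ℝ → ℂ := fun t => Λ t - Λ' t with hd
  have hint : ∀ t ∈ Icc (0:ℝ) 1, ∃ m : ℤ, d t = m * (2 * (Real.pi:ℂ) * Complex.I) := by
    intro t ht
    rw [← Complex.exp_eq_one_iff, hd]
    have hptne : p t ≠ 0 := by rw [← hΛ t ht]; exact Complex.exp_ne_zero _
    simp only
    rw [Complex.exp_sub, hΛ t ht, hΛ' t ht, div_self hptne]
  by_contra hne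
  have hd10 : d 1 - d 0 = z - z' := by
    have h : d 1 - d 0 = (Λ 1 - Λ 0) - (Λ' 1 - Λ' 0) := by rw [hd]; ring
    rw [h, hΛd, hΛ'd]
  set u : ℝ → ℝ := fun t => Complex.abs (d t - d 0) with hu
  have huc : ContinuousOn u (Icc 0 1) :=
    (Complex.continuous_abs.comp (((hΛc.sub hΛ'c)).sub continuous_const)).continuousOn
  have hu0 : u 0 = 0 := by simp [hu]
  obtain ⟨n1, hn1⟩ := hint 1 (right_mem_Icc.mpr zero_le_one)
  obtain ⟨n0, hn0⟩ := hint 0 (left_mem_Icc.mpr zero_le_one)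
  have hk : d 1 - d 0 = ((n1 - n0 : ℤ):ℂ) * (2 * (Real.pi:ℂ) * Complex.I) := by
    rw [hn1, hn0]; push_cast; ring
  have hkne : (n1 - n0 : ℤ) ≠ 0 := by
    intro h
    apply hne
    have : z - z' = 0 := by rw [← hd10, hk, h]; simp
    linear_combination this
  have hu1 : u 1 = |((n1 - n0 : ℤ):ℝ)| * (2*Real.pi) := by
    rw [hu]; simp only; rw [hk, abs_int_two_pi]
  have hgeq : 2 * Real.pi ≤ u 1 := by
    rw [hu1]
    have h1 : (1:ℝ) ≤ |((n1 - n0 : ℤ):ℝ)| := by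
      rw [← Int.cast_abs]
      exact_mod_cast Int.one_le_abs hkne
    nlinarith [Real.pi_pos]
  have hπmem : Real.pi ∈ Icc (u 0) (u 1) := by
    constructor
    · rw [hu0]; exact Real.pi_pos.le
    · linarith [Real.pi_pos]
  obtain ⟨t2, ht2, hut2⟩ := intermediate_value_Icc zero_le_one huc hπmem
  obtain ⟨n2, hn2⟩ := hint t2 ht2
  have h1 : u t2 = |((n2 - n0 : ℤ):ℝ)| * (2*Real.pi) := by
    have h : d t2 - d 0 = ((n2 - n0 : ℤ):ℂ) * (2 * (Real.pi:ℂ) * Complex.I) := by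
      rw [hn2, hn0]; push_cast; ring
    rw [hu]; simp only; rw [h, abs_int_two_pi]
  rw [hut2] at h1
  rcases eq_or_ne (n2 - n0) 0 with h2 | h2
  · rw [h2] at h1; simp at h1
  · have h3 : (1:ℝ) ≤ |((n2 - n0 : ℤ):ℝ)| := by
      rw [← Int.cast_abs]; exact_mod_cast Int.one_le_abs h2
    nlinarith [Real.pi_pos]

private lemma wind_stable {p q : ℝ → ℂ} {z : ℂ} (hp : Continuous p) (hq : Continuous q)
    (hclose : ∀ t ∈ Icc (0:ℝ) 1, Complex.abs (q t - p t) < Complex.abs (p t))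
    (hploop : p 1 = p 0) (hqloop : q 1 = q 0) (hw : Wind p z) : Wind q z := by
  obtain ⟨Λ, hΛc, hΛ, hΛd⟩ := hw
  set cl : ℝ → ℝ := fun t => max 0 (min t 1) with hcl
  have hclc : Continuous cl := continuous_const.max (continuous_id.min continuous_const)
  have hclmem : ∀ t, cl t ∈ Icc (0:ℝ) 1 :=
    fun t => ⟨le_max_left _ _, max_le zero_le_one (min_le_right _ _)⟩
  have hclid : ∀ t ∈ Icc (0:ℝ) 1, cl t = t := by
    intro t ht
    rw [hcl]; simp only
    rw [min_eq_left ht.2, max_eq_right ht.1]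
  have hcl0 : cl 0 = 0 := hclid 0 (left_mem_Icc.mpr zero_le_one)
  have hcl1 : cl 1 = 1 := hclid 1 (right_mem_Icc.mpr zero_le_one)
  set r : ℝ → ℂ := fun t => q (cl t) / p (cl t) with hr
  have hpne : ∀ t, p (cl t) ≠ 0 := by
    intro t h
    have h2 := hclose (cl t) (hclmem t)
    rw [h] at h2; simp only [sub_zero, map_zero] at h2
    exact (not_lt.mpr (AbsoluteValue.nonneg _ _)) h2
  have hrnear : ∀ t, Complex.abs (r t - 1) < 1 := by
    intro t
    rw [hr]; simp only
    rw [div_sub_one (hpne t), map_div₀, div_lt_one (by simpa using norm_pos_iff.mpr (hpne t))]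
    exact hclose (cl t) (hclmem t)
  refine ⟨fun t => Λ t + Complex.log (r t), ?_, ?_, ?_⟩
  · refine hΛc.add (continuous_iff_continuousAt.mpr fun t => ContinuousAt.clog ?_ ?_)
    · exact ((hq.comp hclc).div (hp.comp hclc) hpne).continuousAt
    · exact mem_slit_of_near_one (hrnear t)
  · intro t ht
    rw [Complex.exp_add, hΛ t ht, Complex.exp_log (near_ne_zero (hrnear t))]
    rw [hr]; simp only [hclid t ht]
    have hptne : p t ≠ 0 := by rw [← hclid t ht]; exact hpne t
    rw [mul_comm, div_mul_cancel₀ _ hptne]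
  · have hr10 : r 1 = r 0 := by rw [hr]; simp only [hcl0, hcl1, hploop, hqloop]
    show Λ 1 + Complex.log (r 1) - (Λ 0 + Complex.log (r 0)) = z
    rw [hr10, ← hΛd]; ring

private lemma no_retract (G : ℂ → ℂ) (hGc : Continuous G) (hG0 : ∀ w, G w ≠ 0)
    {N : ℝ} (hN : 0 < N) (hGb : ∀ w, Complex.abs w = N → G w = w) : False := by
  set Φ : ℝ → ℝ → ℂ :=
    fun t s => G ((1 - (t:ℂ)) * (N:ℂ) * Complex.exp (2 * (Real.pi:ℂ) * (s:ℂ) * Complex.I))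
    with hΦ
  have hΦc2 : Continuous (fun ts : ℝ × ℝ => Φ ts.1 ts.2) := by
    apply hGc.comp
    refine Continuous.mul (Continuous.mul ?_ continuous_const) ?_
    · exact continuous_const.sub (Complex.continuous_ofReal.comp continuous_fst)
    · exact Complex.continuous_exp.comp
        (((continuous_const.mul (Complex.continuous_ofReal.comp continuous_snd)).mul
          continuous_const))
  have hΦcs : ∀ t, Continuous (Φ t) := fun t => hΦc2.comp (continuous_const.prodMk continuous_id)
  have hΦ0 : ∀ t s, Φ t s ≠ 0 := fun t s => hG0 _
  have hloop : ∀ t, Φ t 1 = Φ t 0 := by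
    intro t
    rw [hΦ]; simp only
    have h1 : (2 * (Real.pi:ℂ) * ((1:ℝ):ℂ) * Complex.I) = 2 * (Real.pi:ℂ) * Complex.I := by
      push_cast; ring
    have h0 : (2 * (Real.pi:ℂ) * ((0:ℝ):ℂ) * Complex.I) = 0 := by push_cast; ring
    rw [h1, h0, Complex.exp_two_pi_mul_I, Complex.exp_zero]
  set ζ : ℂ := 2 * (Real.pi:ℂ) * Complex.I with hζ
  have hζne : ζ ≠ 0 := by
    rw [hζ]
    intro h
    have h2 := congrArg Complex.abs h
    rw [map_mul, map_mul, Complex.abs_two, Complex.abs_ofReal, Complex.abs_I,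
      _root_.abs_of_nonneg Real.pi_pos.le, map_zero, mul_one] at h2
    nlinarith [Real.pi_pos]
  have hNC : ((N:ℝ):ℂ) ≠ 0 := by
    simp only [ne_eq, Complex.ofReal_eq_zero]
    exact hN.ne'
  have hgood0 : Wind (Φ 0) ζ := by
    refine ⟨fun s => Complex.log N + 2 * (Real.pi:ℂ) * (s:ℂ) * Complex.I, ?_, ?_, ?_⟩
    · exact continuous_const.add
        (((continuous_const.mul (Complex.continuous_ofReal)).mul continuous_const))
    · intro s _
      have habs : Complex.abs ((1 - ((0:ℝ):ℂ)) * (N:ℂ) *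
          Complex.exp (2 * (Real.pi:ℂ) * (s:ℂ) * Complex.I)) = N := by
        rw [map_mul, map_mul, Complex.abs_exp]
        have hre : (2 * (Real.pi:ℂ) * (s:ℂ) * Complex.I).re = 0 := by simp
        rw [hre, Real.exp_zero, mul_one]
        simp [_root_.abs_of_nonneg hN.le]
      rw [hΦ]; simp only
      rw [hGb _ habs, Complex.exp_add, Complex.exp_log hNC]
      push_cast; ring
    · show Complex.log N + 2 * (Real.pi:ℂ) * ((1:ℝ):ℂ) * Complex.I -
        (Complex.log N + 2 * (Real.pi:ℂ) * ((0:ℝ):ℂ) * Complex.I) = ζ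
      rw [hζ]; push_cast; ring
  have hbad1 : Wind (Φ 1) 0 := by
    have hconst : ∀ s, Φ 1 s = Φ 1 0 := by
      intro s
      rw [hΦ]; simp only
      norm_num
    refine ⟨fun _ => Complex.log (Φ 1 0), continuous_const, ?_, by simp⟩
    intro s _
    rw [Complex.exp_log (hΦ0 1 0), hconst s]
  have key : ∀ t₀ : ℝ, ∃ ε > 0, ∀ t, |t - t₀| < ε →
      ((Wind (Φ t₀) ζ → Wind (Φ t) ζ) ∧ (Wind (Φ t) ζ → Wind (Φ t₀) ζ)) := by
    intro t₀
    obtain ⟨s₀, hs₀, hmin⟩ := isCompact_Icc.exists_isMinOn (s := Icc (0:ℝ) 1)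
      (nonempty_Icc.mpr zero_le_one) ((Complex.continuous_abs.comp (hΦcs t₀)).continuousOn)
    set m : ℝ := Complex.abs (Φ t₀ s₀) with hm
    have hmpos : 0 < m := AbsoluteValue.pos _ (hΦ0 t₀ s₀)
    set F : ℝ × ℝ → ℝ := fun x => Complex.abs (Φ x.1 x.2 - Φ t₀ x.2) with hF
    have hFc : Continuous F := Complex.continuous_abs.comp
      (hΦc2.sub (hΦc2.comp (continuous_const.prodMk continuous_snd)))
    set A : Set (ℝ × ℝ) := (Icc (t₀-1) (t₀+1) ×ˢ Icc (0:ℝ) 1) ∩ {x | m ≤ F x} with hA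
    have hAcomp : IsCompact A :=
      (isCompact_Icc.prod isCompact_Icc).inter_right (isClosed_le continuous_const hFc)
    set T : Set ℝ := Prod.fst '' A with hT
    have hTcomp : IsCompact T := hAcomp.image continuous_fst
    have ht₀T : t₀ ∉ T := by
      rintro ⟨⟨t', s'⟩, ⟨_, hge⟩, heq⟩
      simp only at heq
      rw [hF] at hge
      simp only [mem_setOf_eq] at hge
      rw [heq] at hge
      simp at hge
      linarith
    have hεex : ∃ ε, 0 < ε ∧ ε ≤ 1 ∧ ∀ t, |t - t₀| < ε → t ∉ T := by
      rcases T.eq_empty_or_nonempty with hTe | hTe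
      · exact ⟨1, one_pos, le_refl 1, fun t _ => by rw [hTe]; exact notMem_empty t⟩
      · have hdc : ContinuousOn (fun t : ℝ => dist t t₀) T :=
          (continuous_id.dist continuous_const).continuousOn
        obtain ⟨t₁, ht₁, hminT⟩ := hTcomp.exists_isMinOn hTe hdc
        have ht₁pos : 0 < dist t₁ t₀ := by
          rw [dist_pos]
          intro h
          rw [h] at ht₁
          exact ht₀T ht₁
        refine ⟨min 1 (dist t₁ t₀), lt_min one_pos ht₁pos, min_le_left _ _, ?_⟩
        intro t ht hmem
        have h2 := hminT hmem
        simp only [mem_setOf_eq, Real.dist_eq] at h2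
        have h3 : |t - t₀| < dist t₁ t₀ := lt_of_lt_of_le ht (min_le_right _ _)
        rw [Real.dist_eq] at h3
        linarith
    obtain ⟨ε, hεpos, hεle, hεT⟩ := hεex
    refine ⟨ε, hεpos, fun t ht => ?_⟩
    have hclose : ∀ s ∈ Icc (0:ℝ) 1, Complex.abs (Φ t s - Φ t₀ s) < m := by
      intro s hs
      by_contra hge
      push_neg at hge
      refine hεT t ht ⟨(t, s), ⟨⟨?_, hs⟩, hge⟩, rfl⟩
      have h4 := abs_lt.mp (lt_of_lt_of_le ht hεle)
      constructor <;> [linarith [h4.1]; linarith [h4.2]]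
    have hstab : ∀ z, Wind (Φ t₀) z → Wind (Φ t) z := by
      intro z hw
      exact wind_stable (hΦcs t₀) (hΦcs t)
        (fun s hs => lt_of_lt_of_le (hclose s hs) (hmin hs)) (hloop t₀) (hloop t) hw
    constructor
    · exact hstab ζ
    · intro hw
      obtain ⟨z₀, hz₀⟩ := wind_exists (Φ t₀) (hΦcs t₀) (hΦ0 t₀)
      have h2 : Wind (Φ t) z₀ := hstab z₀ hz₀
      rwa [wind_unique h2 hw] at hz₀
  set U : Set ℝ := {t | Wind (Φ t) ζ} with hU
  set V : Set ℝ := {t | ¬ Wind (Φ t) ζ} with hV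
  have hUopen : IsOpen U := by
    rw [Metric.isOpen_iff]
    intro t₀ ht₀
    obtain ⟨ε, hε, hprop⟩ := key t₀
    exact ⟨ε, hε, fun t ht => (hprop t (by rw [← Real.dist_eq]; exact Metric.mem_ball.mp ht)).1 ht₀⟩
  have hVopen : IsOpen V := by
    rw [Metric.isOpen_iff]
    intro t₀ ht₀
    obtain ⟨ε, hε, hprop⟩ := key t₀
    refine ⟨ε, hε, fun t ht hw => ht₀ ((hprop t (by rw [← Real.dist_eq]; exact Metric.mem_ball.mp ht)).2 hw)⟩
  obtain ⟨x, hx⟩ := isPreconnected_Icc (a := (0:ℝ)) (b := 1) U V hUopen hVopen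
    (fun t _ => by by_cases h : Wind (Φ t) ζ; exacts [Or.inl h, Or.inr h])
    ⟨0, left_mem_Icc.mpr zero_le_one, hgood0⟩
    ⟨1, right_mem_Icc.mpr zero_le_one, fun hw => hζne (wind_unique hw hbad1)⟩
  exact hx.2.2 hx.2.1

private noncomputable def eC : (ℝ × ℝ) → ℂ := fun y => Complex.equivRealProdCLM.symm y

private lemma eC_cont : Continuous eC := Complex.equivRealProdCLM.symm.continuous

private lemma eC_inj : Function.Injective eC := Complex.equivRealProdCLM.symm.injective

private lemma eC_right (w : ℂ) : eC (Complex.equivRealProdCLM w) = w :=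
  Complex.equivRealProdCLM.symm_apply_apply w

/-- A compact set on which `y ↦ eC y - eC a` has a continuous logarithm does not
enclose `a` : the connected component of `a` in the complement is unbounded. -/
private lemma nonsep {β : Set (ℝ × ℝ)} (hβ : IsCompact β) {a : ℝ × ℝ} (ha : a ∉ β)
    (Λ : (ℝ × ℝ) → ℂ) (hΛ : Continuous Λ)
    (hexp : ∀ y ∈ β, Complex.exp (Λ y) = eC y - eC a) :
    ¬ Bornology.IsBounded (connectedComponentIn βᶜ a) := by
  intro hbdd
  classical
  set V := connectedComponentIn βᶜ a with hV
  have haV : a ∈ V := mem_connectedComponentIn ha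
  have hVopen : IsOpen V := hβ.isClosed.isOpen_compl.connectedComponentIn
  have hVsub : V ⊆ βᶜ := connectedComponentIn_subset _ _
  have hbound : closure V \ V ⊆ β := by
    intro y hy
    by_contra hyβ
    have hyc : y ∈ βᶜ := hyβ
    set W := connectedComponentIn βᶜ y with hW
    have hWopen : IsOpen W := hβ.isClosed.isOpen_compl.connectedComponentIn
    have hyW : y ∈ W := mem_connectedComponentIn hyc
    obtain ⟨v, hvW, hvV⟩ := mem_closure_iff.mp hy.1 W hWopen hyW
    have h1 : W = connectedComponentIn βᶜ v := connectedComponentIn_eq hvW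
    have h2 : V = connectedComponentIn βᶜ v := connectedComponentIn_eq hvV
    exact hy.2 (by show y ∈ V; rw [h2, ← h1]; exact hyW)
  set G : (ℝ × ℝ) → ℂ :=
    (closure V).piecewise (fun y => Complex.exp (Λ y)) (fun y => eC y - eC a) with hG
  have hfr : ∀ y ∈ frontier (closure V), Complex.exp (Λ y) = eC y - eC a := by
    intro y hy
    apply hexp
    apply hbound
    have hyc2 : y ∈ closure V := by
      have h3 := hy.1
      rwa [closure_closure] at h3
    exact ⟨hyc2, fun hyV => hy.2 (interior_maximal subset_closure hVopen hyV)⟩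
  have hGc : Continuous G :=
    Continuous.piecewise hfr (Complex.continuous_exp.comp hΛ) ((eC_cont.sub continuous_const))
  have hG0 : ∀ y, G y ≠ 0 := by
    intro y
    by_cases hy : y ∈ closure V
    · rw [hG, Set.piecewise_eq_of_mem _ _ _ hy]; exact Complex.exp_ne_zero _
    · rw [hG, Set.piecewise_eq_of_notMem _ _ _ hy]
      rw [sub_ne_zero]
      intro h
      exact hy (subset_closure (by rwa [← eC_inj h] at haV))
  -- bound the closure
  obtain ⟨r, hr⟩ := (Metric.isBounded_iff_subset_closedBall a).mp hbdd.closure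
  set M : ℝ := ‖(Complex.equivRealProdCLM.symm : (ℝ × ℝ) →L[ℝ] ℂ)‖ with hM
  have hMnonneg : 0 ≤ M := norm_nonneg _
  set N : ℝ := M * |r| + 1 with hN
  have hNpos : 0 < N := by positivity
  have hout : ∀ y ∈ closure V, Complex.abs (eC y - eC a) < N := by
    intro y hy
    have h1 : dist y a ≤ r := Metric.mem_closedBall.mp (hr hy)
    have h2 : eC y - eC a = (Complex.equivRealProdCLM.symm : (ℝ × ℝ) →L[ℝ] ℂ) (y - a) := by
      simp [eC, map_sub]
    rw [← Complex.norm_eq_abs, h2]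
    calc ‖(Complex.equivRealProdCLM.symm : (ℝ × ℝ) →L[ℝ] ℂ) (y - a)‖
        ≤ M * ‖y - a‖ := ContinuousLinearMap.le_opNorm _ _
      _ ≤ M * |r| := by
          apply mul_le_mul_of_nonneg_left _ hMnonneg
          rw [← dist_eq_norm]
          exact le_trans h1 (le_abs_self r)
      _ < N := by rw [hN]; linarith
  set G' : ℂ → ℂ := fun w => G (Complex.equivRealProdCLM (w + eC a)) with hG'
  have hG'c : Continuous G' := hGc.comp (Complex.equivRealProdCLM.continuous.comp
    (continuous_id.add continuous_const))
  have hG'0 : ∀ w, G' w ≠ 0 := fun w => hG0 _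
  have hG'b : ∀ w, Complex.abs w = N → G' w = w := by
    intro w hw
    set y := Complex.equivRealProdCLM (w + eC a) with hy
    have hey : eC y - eC a = w := by rw [hy, eC_right]; ring
    have hynot : y ∉ closure V := by
      intro hmem
      have := hout y hmem
      rw [hey, hw] at this
      exact lt_irrefl _ this
    rw [hG']; simp only
    rw [← hy, hG, Set.piecewise_eq_of_notMem _ _ _ hynot, hey]
  exact no_retract G' hG'c hG'0 hNpos hG'b

private lemma compl_pathConnected {β : Set (ℝ × ℝ)} (hβ : IsCompact β)
    (hlog : ∀ a, a ∉ β → ∃ Λ : (ℝ × ℝ) → ℂ, Continuous Λ ∧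
      ∀ y ∈ β, Complex.exp (Λ y) = eC y - eC a) :
    IsPathConnected βᶜ := by
  obtain ⟨r0, hr0⟩ := (Metric.isBounded_iff_subset_closedBall 0).mp hβ.isBounded
  set N : ℝ := |r0| + 1 with hNdef
  have hNpos : 0 < N := by positivity
  set Ebig : Set (ℝ × ℝ) := {y | N < ‖y‖} with hE
  have hEβ : Ebig ⊆ βᶜ := by
    intro y hy hyβ
    have h1 : dist y 0 ≤ r0 := Metric.mem_closedBall.mp (hr0 hyβ)
    rw [dist_zero_right] at h1
    have h2 : N < ‖y‖ := hy
    have := le_abs_self r0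
    rw [hNdef] at h2
    linarith
  have hrank : 1 < Module.rank ℝ (ℝ × ℝ) := by
    rw [rank_prod, Module.rank_self, Cardinal.lift_one]
    norm_num
  have pc0 : IsPathConnected ({(0 : ℝ × ℝ)}ᶜ) :=
    (Set.countable_singleton (0 : ℝ × ℝ)).isPathConnected_compl_of_one_lt_rank hrank
  set f : (ℝ × ℝ) → (ℝ × ℝ) := fun y => ((N + ‖y‖)/‖y‖) • y with hf
  have hfc : ContinuousOn f ({(0 : ℝ × ℝ)}ᶜ) := by
    refine ContinuousOn.smul (f := fun y : ℝ × ℝ => (N + ‖y‖)/‖y‖) (g := id) ?_ continuousOn_id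
    apply ContinuousOn.div (continuous_const.add continuous_norm).continuousOn
      continuous_norm.continuousOn
    intro y hy
    simpa using hy
  have himg : f '' ({(0 : ℝ × ℝ)}ᶜ) = Ebig := by
    apply Set.eq_of_subset_of_subset
    · rintro _ ⟨y, hy, rfl⟩
      have hyne : y ≠ 0 := by simpa using hy
      have hynorm : 0 < ‖y‖ := norm_pos_iff.mpr hyne
      show N < ‖f y‖
      rw [hf]; simp only
      rw [norm_smul, Real.norm_eq_abs, _root_.abs_of_pos (by positivity),
        div_mul_cancel₀ _ hynorm.ne']
      linarith
    · intro w hw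
      have hwN : N < ‖w‖ := hw
      have hwpos : 0 < ‖w‖ := lt_trans hNpos hwN
      have hwne : w ≠ 0 := norm_pos_iff.mp hwpos
      set x : ℝ × ℝ := ((‖w‖ - N)/‖w‖) • w with hx
      have hcoef : 0 < (‖w‖ - N)/‖w‖ := div_pos (by linarith) hwpos
      have hxne : x ≠ 0 := smul_ne_zero hcoef.ne' hwne
      refine ⟨x, by simpa using hxne, ?_⟩
      have hxnorm : ‖x‖ = ‖w‖ - N := by
        rw [hx, norm_smul, Real.norm_eq_abs, _root_.abs_of_pos hcoef,
          div_mul_cancel₀ _ hwpos.ne']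
      rw [hf]; simp only
      rw [hxnorm, hx, smul_smul]
      have hwNne : ‖w‖ - N ≠ 0 := ne_of_gt (by linarith)
      have : (N + (‖w‖ - N)) / (‖w‖ - N) * ((‖w‖ - N) / ‖w‖) = 1 := by
        field_simp
        ring
      rw [this, one_smul]
  have hEpc : IsPathConnected Ebig := by rw [← himg]; exact pc0.image' hfc
  have hEne : Ebig.Nonempty := by
    obtain ⟨z, hz, -⟩ := hEpc
    exact ⟨z, hz⟩
  have hEsub : ∀ a, a ∉ β → Ebig ⊆ connectedComponentIn βᶜ a := by
    intro a ha
    obtain ⟨Λ, hΛc, hΛe⟩ := hlog a ha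
    have hunb := nonsep hβ ha Λ hΛc hΛe
    have hbig : ∃ y ∈ connectedComponentIn βᶜ a, N < ‖y‖ := by
      by_contra hcon
      push_neg at hcon
      apply hunb
      apply (Metric.isBounded_iff_subset_closedBall 0).mpr
      exact ⟨N, fun y hy => by
        rw [Metric.mem_closedBall, dist_zero_right]; exact hcon y hy⟩
    obtain ⟨y, hyc, hyN⟩ := hbig
    have h1 : connectedComponentIn βᶜ a = connectedComponentIn βᶜ y :=
      connectedComponentIn_eq hyc
    rw [h1]
    exact hEpc.isConnected.2.subset_connectedComponentIn hyN hEβ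
  obtain ⟨a₀, ha₀E⟩ := hEne
  have ha₀β : a₀ ∈ βᶜ := hEβ ha₀E
  have hcompeq : βᶜ = connectedComponentIn βᶜ a₀ := by
    apply Set.eq_of_subset_of_subset
    · intro b hb
      have h1 : a₀ ∈ connectedComponentIn βᶜ b := hEsub b hb ha₀E
      have h2 := connectedComponentIn_eq h1
      rw [← h2]
      exact mem_connectedComponentIn hb
    · exact connectedComponentIn_subset _ _
  have hconn : IsConnected βᶜ := by
    rw [hcompeq]
    exact isConnected_connectedComponentIn_iff.mpr ha₀β
  exact (hβ.isClosed.isOpen_compl.isConnected_iff_isPathConnected).mp hconn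

/-- A simple closed curve in the plane: the image of a continuous injective map
from the circle `AddCircle 1`. -/
def SimpleClosedCurve (C : Set (ℝ × ℝ)) : Prop :=
  ∃ γ : AddCircle (1 : ℝ) → ℝ × ℝ, Continuous γ ∧ Function.Injective γ ∧ Set.range γ = C

private lemma scc_param {C : Set (ℝ × ℝ)} (h : SimpleClosedCurve C) :
    ∃ ψ : ℝ → ℝ × ℝ, Continuous ψ ∧ Set.range ψ = C ∧
      (∀ s t : ℝ, ψ s = ψ t ↔ ∃ k : ℤ, s - t = (k:ℝ)) := by
  obtain ⟨γ, hγc, hγinj, hγr⟩ := h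
  refine ⟨fun t => γ ((t : ℝ) : AddCircle (1:ℝ)), hγc.comp (AddCircle.continuous_mk' 1), ?_, ?_⟩
  · rw [← hγr]
    have hsurj : Function.Surjective (fun t : ℝ => ((t : ℝ) : AddCircle (1:ℝ))) :=
      QuotientAddGroup.mk_surjective
    exact hsurj.range_comp γ
  · intro s t
    constructor
    · intro hst
      have h1 : ((s : ℝ) : AddCircle (1:ℝ)) = t := hγinj hst
      rw [QuotientAddGroup.eq_iff_sub_mem] at h1
      obtain ⟨k, hk⟩ := AddSubgroup.mem_zmultiples_iff.mp h1
      exact ⟨k, by rw [← hk, zsmul_eq_mul, mul_one]⟩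
    · rintro ⟨k, hk⟩
      have h1 : ((s : ℝ) : AddCircle (1:ℝ)) = t := by
        rw [QuotientAddGroup.eq_iff_sub_mem]
        apply AddSubgroup.mem_zmultiples_iff.mpr
        exact ⟨k, by rw [zsmul_eq_mul, mul_one, hk]⟩
      rw [show (fun t : ℝ => γ ((t : ℝ) : AddCircle (1:ℝ))) s = γ s from rfl, h1]

private lemma scc_compact {C : Set (ℝ × ℝ)} (h : SimpleClosedCurve C) : IsCompact C := by
  obtain ⟨γ, hγc, _, hγr⟩ := h
  haveI : Fact ((0:ℝ) < 1) := ⟨one_pos⟩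
  rw [← hγr]
  exact isCompact_range hγc

/-- Near any point of a simple closed curve, all of the curve except a compact "arc" `β`
(avoiding the point) is within distance `R`, and `y ↦ eC y - eC a` has a continuous
logarithm on `β` for every `a ∉ β`. -/
private lemma arc_split {C : Set (ℝ × ℝ)} (hC : SimpleClosedCurve C) {x : ℝ × ℝ} (hx : x ∈ C)
    {R : ℝ} (hR : 0 < R) :
    ∃ β : Set (ℝ × ℝ), IsCompact β ∧ β ⊆ C ∧ x ∉ β ∧
      (∀ c ∈ C, c ∉ β → c ∈ Metric.ball x R) ∧
      (∀ a, a ∉ β → ∃ Λ : (ℝ × ℝ) → ℂ, Continuous Λ ∧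
        ∀ y ∈ β, Complex.exp (Λ y) = eC y - eC a) := by
  obtain ⟨ψ, hψcont, hψr, hψeq⟩ := scc_param hC
  have hx' : x ∈ range ψ := by rw [hψr]; exact hx
  obtain ⟨r₀, hr₀⟩ := hx'
  have hcont := hψcont.continuousAt (x := r₀)
  rw [Metric.continuousAt_iff] at hcont
  obtain ⟨δ₁, hδ₁pos, hδ₁⟩ := hcont R hR
  set δ : ℝ := min (δ₁/2) (1/4) with hδdef
  have hδpos : 0 < δ := lt_min (by linarith) (by norm_num)
  have hδlt : δ < 1/2 := lt_of_le_of_lt (min_le_right _ _) (by norm_num)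
  have hδnear : ∀ u : ℝ, |u - r₀| ≤ δ → dist (ψ u) x < R := by
    intro u hu
    rw [← hr₀]
    apply hδ₁
    rw [Real.dist_eq]
    calc |u - r₀| ≤ δ := hu
    _ ≤ δ₁/2 := min_le_left _ _
    _ < δ₁ := by linarith
  set β : Set (ℝ × ℝ) := ψ '' (Icc (r₀ + δ) (r₀ + 1 - δ)) with hβdef
  have hβcomp : IsCompact β := isCompact_Icc.image hψcont
  have hβC : β ⊆ C := by rw [← hψr]; exact image_subset_range _ _
  have hxβ : x ∉ β := by
    rintro ⟨u, hu, huψ⟩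
    rw [← hr₀] at huψ
    obtain ⟨k, hk⟩ := (hψeq u r₀).mp huψ
    have h1 : δ ≤ u - r₀ := by linarith [hu.1]
    have h2 : u - r₀ ≤ 1 - δ := by linarith [hu.2]
    rw [hk] at h1 h2
    have h3 : (0:ℝ) < (k:ℝ) := lt_of_lt_of_le hδpos h1
    have h4 : (k:ℝ) < 1 := by linarith
    have h5 : (0:ℤ) < k := by exact_mod_cast h3
    have h6 : (k:ℤ) < 1 := by exact_mod_cast h4
    omega
  have hnear : ∀ c ∈ C, c ∉ β → c ∈ Metric.ball x R := by
    intro c hc hcβ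
    have hc' : c ∈ range ψ := by rw [hψr]; exact hc
    obtain ⟨r, hr⟩ := hc'
    set u : ℝ := r₀ - δ + Int.fract (r - (r₀ - δ)) with hudef
    have hufr : ψ u = c := by
      rw [← hr]
      apply (hψeq u r).mpr
      refine ⟨-⌊r - (r₀ - δ)⌋, ?_⟩
      have hfl := Int.floor_add_fract (r - (r₀ - δ))
      rw [hudef]
      push_cast
      linarith
    have hu1 : r₀ - δ ≤ u := by
      rw [hudef]; linarith [Int.fract_nonneg (r - (r₀ - δ))]
    have hu2 : u < r₀ + 1 - δ := by
      rw [hudef]; linarith [Int.fract_lt_one (r - (r₀ - δ))]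
    by_cases hcase : r₀ + δ ≤ u
    · exact absurd ⟨u, ⟨hcase, hu2.le⟩, hufr⟩ hcβ
    · push_neg at hcase
      rw [Metric.mem_ball, ← hufr]
      exact hδnear u (abs_le.mpr ⟨by linarith, by linarith⟩)
  refine ⟨β, hβcomp, hβC, hxβ, hnear, ?_⟩
  intro a haβ
  have h2δ : (0:ℝ) < 1 - 2*δ := by linarith
  set q : ℝ → ℝ × ℝ := fun v => ψ (r₀ + δ + v * (1 - 2*δ)) with hqdef
  have hqcont : Continuous q := hψcont.comp (continuous_const.add (continuous_id.mul continuous_const))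
  have hqmem : ∀ v ∈ Icc (0:ℝ) 1, q v ∈ β := by
    intro v hv
    refine ⟨r₀ + δ + v * (1 - 2*δ), ⟨?_, ?_⟩, rfl⟩
    · nlinarith [hv.1]
    · nlinarith [hv.2]
  set cl : ℝ → ℝ := fun v => max 0 (min v 1) with hcl
  have hclc : Continuous cl := continuous_const.max (continuous_id.min continuous_const)
  have hclmem : ∀ v, cl v ∈ Icc (0:ℝ) 1 :=
    fun v => ⟨le_max_left _ _, max_le zero_le_one (min_le_right _ _)⟩
  set p : ℝ → ℂ := fun v => eC (q (cl v)) - eC a with hpdef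
  have hpcont : Continuous p := (eC_cont.comp (hqcont.comp hclc)).sub continuous_const
  have hp0 : ∀ v, p v ≠ 0 := by
    intro v h
    rw [hpdef] at h; simp only at h
    rw [sub_eq_zero] at h
    exact haβ (by rw [← eC_inj h]; exact hqmem _ (hclmem v))
  obtain ⟨lam, hlamc, hlam⟩ := exists_log p hpcont hp0
  haveI : CompactSpace ↥(Icc (0:ℝ) 1) := isCompact_iff_compactSpace.mp isCompact_Icc
  have hQinj : ∀ v v' : ℝ, v ∈ Icc (0:ℝ) 1 → v' ∈ Icc (0:ℝ) 1 → q v = q v' → v = v' := by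
    intro v v' hv hv' hq
    obtain ⟨k, hk⟩ := (hψeq _ _).mp hq
    have h1 : (r₀ + δ + v * (1-2*δ)) - (r₀ + δ + v' * (1-2*δ)) = (v - v') * (1-2*δ) := by ring
    rw [h1] at hk
    have h2 : |(k:ℝ)| < 1 := by
      rw [← hk, abs_mul]
      have hv1 : |v - v'| ≤ 1 := by
        rw [abs_le]
        constructor
        · linarith [hv.1, hv'.2]
        · linarith [hv.2, hv'.1]
      calc |v - v'| * |1 - 2*δ| ≤ 1 * |1-2*δ| :=
            mul_le_mul_of_nonneg_right hv1 (abs_nonneg _)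
        _ = 1 - 2*δ := by rw [one_mul, _root_.abs_of_pos h2δ]
        _ < 1 := by linarith
    have h3 : k = 0 := by
      rw [← Int.cast_abs] at h2
      have h4 : |k| < 1 := by exact_mod_cast h2
      exact Int.abs_lt_one_iff.mp h4
    rw [h3, Int.cast_zero] at hk
    rcases mul_eq_zero.mp hk with h | h
    · exact sub_eq_zero.mp h
    · linarith
  set Q : ↥(Icc (0:ℝ) 1) → ↥β := fun v => ⟨q v.val, hqmem v.val v.property⟩ with hQ
  have hQc : Continuous Q := Continuous.subtype_mk (hqcont.comp continuous_subtype_val) _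
  have hQbij : Function.Bijective Q := by
    constructor
    · intro v v' h
      apply Subtype.ext
      exact hQinj _ _ v.property v'.property (congrArg Subtype.val h)
    · rintro ⟨y, hy⟩
      obtain ⟨u, hu, huy⟩ := hy
      refine ⟨⟨(u - r₀ - δ)/(1 - 2*δ), ⟨?_, ?_⟩⟩, ?_⟩
      · apply div_nonneg _ h2δ.le; linarith [hu.1]
      · rw [div_le_one h2δ]; linarith [hu.2]
      · apply Subtype.ext
        show q _ = y
        rw [hqdef]; simp only
        rw [div_mul_cancel₀ _ h2δ.ne', ← huy]
        congr 1
        ring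
  set E := Equiv.ofBijective Q hQbij with hE
  set H : ↥(Icc (0:ℝ) 1) ≃ₜ ↥β := Continuous.homeoOfEquivCompactToT2 (f := E) hQc with hH
  set Λβ : C(↥β, ℂ) := ⟨fun y => lam ((H.symm y : ↥(Icc (0:ℝ) 1)) : ℝ),
    hlamc.comp (continuous_subtype_val.comp H.symm.continuous)⟩ with hΛβ
  obtain ⟨g, hg⟩ := ContinuousMap.exists_restrict_eq hβcomp.isClosed Λβ
  refine ⟨⇑g, g.continuous, ?_⟩
  intro y hy
  have h1 : g y = Λβ ⟨y, hy⟩ := by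
    have h2 := DFunLike.congr_fun hg (⟨y, hy⟩ : ↥β)
    simpa using h2
  rw [h1]
  set v := H.symm ⟨y, hy⟩ with hv
  have hvIcc : (v : ℝ) ∈ Icc (0:ℝ) 1 := v.property
  have h2 : Complex.exp (lam (v : ℝ)) = p (v : ℝ) := hlam _ hvIcc
  have h3 : q (v:ℝ) = y := by
    have h4 : H v = ⟨y, hy⟩ := by rw [hv]; exact H.apply_symm_apply _
    have h5 : (H v : ℝ×ℝ) = q (v:ℝ) := by rw [hH]; rfl
    rw [← h5, h4]
  have h6 : Λβ ⟨y,hy⟩ = lam (v:ℝ) := rfl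
  rw [h6, h2, hpdef]
  simp only
  have h7 : cl (v:ℝ) = (v:ℝ) := by
    rw [hcl]; simp only
    rw [min_eq_left hvIcc.2, max_eq_right hvIcc.1]
  rw [h7, h3]

private lemma curve_dense_compl {D : Set (ℝ × ℝ)} (hD : SimpleClosedCurve D) {F : Set (ℝ × ℝ)}
    (hF : F.Finite) : D ⊆ closure (D \ F) := by
  obtain ⟨ψ, hψcont, hψr, hψeq⟩ := scc_param hD
  intro x hx
  have hx' : x ∈ range ψ := by rw [hψr]; exact hx
  obtain ⟨r₀, hr₀⟩ := hx'
  rw [Metric.mem_closure_iff]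
  intro ε hε
  have hcont := hψcont.continuousAt (x := r₀)
  rw [Metric.continuousAt_iff] at hcont
  obtain ⟨δ₂, hδ₂pos, hδ₂⟩ := hcont ε hε
  set I : Set ℝ := Ioo (0:ℝ) (min δ₂ (1/2)) with hI
  have hImin : (0:ℝ) < min δ₂ (1/2) := lt_min hδ₂pos (by norm_num)
  have hIinf : I.Infinite := Set.Ioo_infinite hImin
  have hinj : Set.InjOn (fun t => ψ (r₀ + t)) I := by
    intro t ht t' ht' h
    obtain ⟨k, hk⟩ := (hψeq _ _).mp h
    have h1 : (r₀ + t) - (r₀ + t') = t - t' := by ring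
    rw [h1] at hk
    have hta : t < 1/2 := lt_of_lt_of_le ht.2 (min_le_right _ _)
    have htb : t' < 1/2 := lt_of_lt_of_le ht'.2 (min_le_right _ _)
    have h2 : |(k:ℝ)| < 1 := by
      rw [← hk, abs_lt]
      constructor
      · linarith [ht.1, ht'.1]
      · linarith [ht.1, ht'.1]
    have h3 : k = 0 := by
      rw [← Int.cast_abs] at h2
      have h4 : |k| < 1 := by exact_mod_cast h2
      exact Int.abs_lt_one_iff.mp h4
    rw [h3, Int.cast_zero, sub_eq_zero] at hk
    exact hk
  set B : Set ℝ := I ∩ (fun t => ψ (r₀ + t)) ⁻¹' F with hB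
  have hBfin : B.Finite := by
    apply Set.Finite.of_finite_image _ (hinj.mono inter_subset_left)
    apply hF.subset
    rintro _ ⟨t, ht, rfl⟩
    exact ht.2
  obtain ⟨t, htd⟩ := (hIinf.diff hBfin).nonempty
  have htI : t ∈ I := htd.1
  refine ⟨ψ (r₀ + t), ⟨?_, ?_⟩, ?_⟩
  · rw [← hψr]; exact mem_range_self _
  · intro hFmem
    exact htd.2 ⟨htI, hFmem⟩
  · rw [← hr₀, dist_comm]
    apply hδ₂
    rw [Real.dist_eq]
    have h5 : |r₀ + t - r₀| = t := by
      rw [show r₀ + t - r₀ = t by ring]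
      exact _root_.abs_of_pos htI.1
    rw [h5]
    exact lt_of_lt_of_le htI.2 (min_le_left _ _)

/-- two simple closed curves `C`, `D` in the plane, with Jordan
decompositions `Cᶜ = bC ∪ uC` and `Dᶜ = bD ∪ uD` (`bC`, `bD` the bounded open
connected components, `uC`, `uD` the unbounded ones), such that `C ∩ D` is finite
and `D` does not meet both complementary components of `C` (the curves do not
cross).  If `D` meets `bC`, then `D ⊆ closure bC` and `bD ⊆ bC`. -/
theorem noncrossing_curve_nested
    (C D bC uC bD uD : Set (ℝ × ℝ))
    (hC : SimpleClosedCurve C) (hD : SimpleClosedCurve D)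
    (hCdecomp : Cᶜ = bC ∪ uC) (hCdisj : Disjoint bC uC)
    (hbC : IsOpen bC ∧ IsConnected bC ∧ Bornology.IsBounded bC)
    (huC : IsOpen uC ∧ IsConnected uC ∧ ¬ Bornology.IsBounded uC)
    (hDdecomp : Dᶜ = bD ∪ uD) (hDdisj : Disjoint bD uD)
    (hbD : IsOpen bD ∧ IsConnected bD ∧ Bornology.IsBounded bD)
    (huD : IsOpen uD ∧ IsConnected uD ∧ ¬ Bornology.IsBounded uD)
    (hfin : (C ∩ D).Finite)
    (hnocross : ¬ ((D ∩ bC).Nonempty ∧ (D ∩ uC).Nonempty))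
    (hmeets : (D ∩ bC).Nonempty) :
    D ⊆ closure bC ∧ bD ⊆ bC := by
  have hCcomp := scc_compact hC
  have hDcomp := scc_compact hD
  have hCclosed := hCcomp.isClosed
  have hDclosed := hDcomp.isClosed
  have hDuC : D ∩ uC = ∅ := Set.not_nonempty_iff_eq_empty.mp (fun h => hnocross ⟨hmeets, h⟩)
  have hbCsub : bC ⊆ Cᶜ := by rw [hCdecomp]; exact subset_union_left
  have huCsub : uC ⊆ Cᶜ := by rw [hCdecomp]; exact subset_union_right
  have hbDsub : bD ⊆ Dᶜ := by rw [hDdecomp]; exact subset_union_left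
  have hmemC : ∀ y, y ∉ C → y ∈ bC ∨ y ∈ uC := by
    intro y hy
    have h : y ∈ Cᶜ := hy
    rw [hCdecomp] at h
    exact h
  have hmemD : ∀ y, y ∉ D → y ∈ bD ∨ y ∈ uD := by
    intro y hy
    have h : y ∈ Dᶜ := hy
    rw [hDdecomp] at h
    exact h
  have hDC : ∀ y ∈ D, y ∉ C → y ∈ bC := by
    intro y hyD hyC
    rcases hmemC y hyC with h | h
    · exact h
    · exact (Set.eq_empty_iff_forall_notMem.mp hDuC y ⟨hyD, h⟩).elim
  have part1 : D ⊆ closure bC := by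
    intro d hd
    have h1 := curve_dense_compl hD hfin hd
    apply closure_mono _ h1
    intro y hy
    exact hDC y hy.1 (fun hyC => hy.2 ⟨hyC, hy.1⟩)
  have huCD : ∀ y ∈ uC, y ∉ D := by
    intro y hy hyD
    exact Set.eq_empty_iff_forall_notMem.mp hDuC y ⟨hyD, hy⟩
  have huCuD : uC ⊆ uD := by
    have hsub : uC ⊆ bD ∪ uD := fun y hy => hmemD y (huCD y hy)
    by_cases hcase : (uC ∩ uD).Nonempty
    · have hsub' : uC ⊆ uD ∪ bD := by rwa [union_comm] at hsub
      exact IsPreconnected.subset_left_of_subset_union huD.1 hbD.1 hDdisj.symm hsub' hcase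
        huC.2.1.isPreconnected
    · exfalso
      apply huC.2.2
      apply hbD.2.2.subset
      intro y hy
      rcases hsub hy with h | h
      · exact h
      · exact (hcase ⟨y, hy, h⟩).elim
  have kernel : ∀ x ∈ bD, x ∉ C := by
    intro x hxbD hxC
    have hxD : x ∉ D := fun h => (hbDsub hxbD) h
    have hDne : D.Nonempty := by
      obtain ⟨γD, _, _, hγDr⟩ := hD
      rw [← hγDr]
      exact ⟨_, mem_range_self ((0:ℝ) : AddCircle (1:ℝ))⟩
    set R : ℝ := Metric.infDist x D with hR
    have hRpos : 0 < R := by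
      have h0 : 0 ≤ R := Metric.infDist_nonneg
      rcases h0.lt_or_eq with h | h
      · exact h
      · exfalso
        apply hxD
        have h1 : x ∈ closure D := (Metric.mem_closure_iff_infDist_zero hDne).mpr h.symm
        rwa [hDclosed.closure_eq] at h1
    have hballD : ∀ y ∈ Metric.ball x R, y ∉ D := by
      intro y hy hyD
      have h1 := Metric.infDist_le_dist_of_mem (x := x) hyD
      rw [Metric.mem_ball, dist_comm] at hy
      rw [← hR] at h1
      linarith
    have hballbD : Metric.ball x R ⊆ bD := by
      have hsub : Metric.ball x R ⊆ bD ∪ uD := fun y hy => hmemD y (hballD y hy)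
      exact IsPreconnected.subset_left_of_subset_union hbD.1 huD.1 hDdisj hsub
        ⟨x, Metric.mem_ball_self hRpos, hxbD⟩ (convex_ball x R).isPreconnected
    obtain ⟨β, hβcomp, hβC, hxβ, hβnear, hβlog⟩ := arc_split hC hxC (half_pos hRpos)
    have hpc := compl_pathConnected hβcomp hβlog
    obtain ⟨a, haU⟩ := huC.2.1.nonempty
    obtain ⟨b, hbB⟩ := hbC.2.1.nonempty
    have haβ : a ∉ β := fun h => (huCsub haU) (hβC h)
    have hbβ : b ∉ β := fun h => (hbCsub hbB) (hβC h)
    obtain ⟨σ, hσmem⟩ := hpc.joinedIn a haβ b hbβ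
    set A : Set ℝ := Icc (0:ℝ) 1 ∩ σ.extend ⁻¹' C with hA
    have hAclosed : IsClosed A := isClosed_Icc.inter (hCclosed.preimage σ.continuous_extend)
    have hAne : A.Nonempty := by
      by_contra hAe
      rw [Set.not_nonempty_iff_eq_empty] at hAe
      set P := σ.extend '' (Icc (0:ℝ) 1) with hP
      have hPC : P ⊆ Cᶜ := by
        rintro _ ⟨t, ht, rfl⟩ hmem
        have h1 : t ∈ A := ⟨ht, hmem⟩
        rw [hAe] at h1
        exact notMem_empty t h1
      have hPsub : P ⊆ uC ∪ bC := by
        intro y hy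
        rcases hmemC y (hPC hy) with h | h
        · exact Or.inr h
        · exact Or.inl h
      have hPpre : IsPreconnected P :=
        isPreconnected_Icc.image _ σ.continuous_extend.continuousOn
      have haP : a ∈ P := ⟨0, left_mem_Icc.mpr zero_le_one, by simp⟩
      have hsubuC : P ⊆ uC := IsPreconnected.subset_left_of_subset_union huC.1 hbC.1
        hCdisj.symm hPsub ⟨a, haP, haU⟩ hPpre
      have hbP : b ∈ P := ⟨1, right_mem_Icc.mpr zero_le_one, by simp⟩
      exact Set.disjoint_left.mp hCdisj hbB (hsubuC hbP)
    have hAbdd : BddBelow A := ⟨0, fun t ht => ht.1.1⟩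
    set t₁ : ℝ := sInf A with ht₁
    have ht₁A : t₁ ∈ A := hAclosed.csInf_mem hAne hAbdd
    set w := σ.extend t₁ with hw
    have hwC : w ∈ C := ht₁A.2
    have ht₁pos : 0 < t₁ := by
      rcases (ht₁A.1.1).lt_or_eq with h | h
      · exact h
      · exfalso
        apply huCsub haU
        have h1 : σ.extend 0 ∈ C := by rw [h]; exact hwC
        rwa [Path.extend_zero] at h1
    have hJuC : σ.extend '' (Ico 0 t₁) ⊆ uC := by
      have hJC : σ.extend '' (Ico 0 t₁) ⊆ Cᶜ := by
        rintro _ ⟨t, ht, rfl⟩ hmem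
        have htA : t ∈ A := ⟨⟨ht.1, le_trans ht.2.le ht₁A.1.2⟩, hmem⟩
        have h1 := csInf_le hAbdd htA
        rw [← ht₁] at h1
        linarith [ht.2]
      have hJsub : σ.extend '' (Ico 0 t₁) ⊆ uC ∪ bC := by
        intro y hy
        rcases hmemC y (hJC hy) with h | h
        · exact Or.inr h
        · exact Or.inl h
      have hJpre : IsPreconnected (σ.extend '' (Ico 0 t₁)) :=
        isPreconnected_Ico.image _ σ.continuous_extend.continuousOn
      have haJ : a ∈ σ.extend '' (Ico 0 t₁) := ⟨0, ⟨le_refl 0, ht₁pos⟩, by simp⟩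
      exact IsPreconnected.subset_left_of_subset_union huC.1 hbC.1 hCdisj.symm hJsub
        ⟨a, haJ, haU⟩ hJpre
    have hwcl : w ∈ closure uC := by
      have h1 : t₁ ∈ closure (Ico 0 t₁) := by
        rw [closure_Ico (ne_of_lt ht₁pos)]
        exact ⟨ht₁pos.le, le_refl _⟩
      have h2 : w ∈ σ.extend '' closure (Ico 0 t₁) := ⟨t₁, h1, rfl⟩
      have h3 := image_closure_subset_closure_image σ.continuous_extend h2
      exact closure_mono hJuC h3
    have hwβ : w ∉ β := by
      have h1 : σ.extend t₁ = σ ⟨t₁, ht₁A.1⟩ := σ.extend_apply ht₁A.1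
      rw [hw, h1]
      exact hσmem _
    have hwball : w ∈ Metric.ball x (R/2) := hβnear w hwC hwβ
    have hball2 : Metric.ball x (R/2) ⊆ Metric.ball x R := Metric.ball_subset_ball (by linarith)
    obtain ⟨u, huball, huuC⟩ := _root_.mem_closure_iff.mp hwcl (Metric.ball x (R/2))
      Metric.isOpen_ball hwball
    exact Set.disjoint_left.mp hDdisj (hballbD (hball2 huball)) (huCuD huuC)
  refine ⟨part1, ?_⟩
  intro x hx
  have hxC : x ∉ C := kernel x hx
  rcases hmemC x hxC with h | h
  · exact h
  · exact absurd (Set.disjoint_left.mp hDdisj hx (huCuD h)) (fun f => f.elim)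
end

section
/- Let S be a finite family of simple closed curves in the plane that are pairwise non-crossing (for any two distinct curves s, t in S, the curve Im(t) does not meet both the bounded and unbounded complementary components of Im(s)). Define S_II to be the set of s ∈ S such that there exists t ∈ S with the bounded component b_t strictly contained in the bounded component b_s. Then the bounded complementary components {b_s : s ∈ S} are pairwise disjoint if and only if S_II = ∅. -/
open Set Metric Bornology Complex

namespace SeifertAux

lemma prod_div_telescope (f : ℕ → ℂ) (n : ℕ) (hf : ∀ i, i ≤ n → f i ≠ 0) :
    (∏ i ∈ Finset.range n, (f (i + 1) / f i)) = f n / f 0 := by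
  induction n with
  | zero => simp [div_self (hf 0 le_rfl)]
  | succ n ih =>
    rw [Finset.prod_range_succ, ih (fun i hi => hf i (hi.trans n.le_succ))]
    have h0 : f 0 ≠ 0 := hf 0 (Nat.zero_le _)
    have hn : f n ≠ 0 := hf n n.le_succ
    field_simp

lemma re_pos_of_abs_lt {w : ℂ} (h : ‖w - 1‖ < 1) : 0 < w.re := by
  have h1 : (w - 1).re ≥ -‖w - 1‖ := by
    have := Complex.abs_re_le_norm (w - 1)
    rw [abs_le] at this
    linarith [this.1]
  have h2 : (w - 1).re = w.re - 1 := by simp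
  linarith

lemma ratio_facts {u v : ℂ} (hv : v ≠ 0) (h : ‖u - v‖ < ‖v‖) :
    u / v ≠ 0 ∧ 0 < (u / v).re := by
  have hu : u ≠ 0 := by
    rintro rfl
    simp only [zero_sub, norm_neg] at h
    exact absurd h (lt_irrefl _)
  refine ⟨div_ne_zero hu hv, ?_⟩
  apply re_pos_of_abs_lt
  have heq : u / v - 1 = (u - v) / v := by field_simp
  rw [heq, norm_div, div_lt_one (norm_pos_iff.mpr hv)]
  exact h

/-- There is no continuous nonvanishing map `H : ℂ → ℂ` that agrees with `z ↦ z - x`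
on the circle of radius `R` around `x`. -/
lemma no_winding {x : ℂ} {R : ℝ} (hR : 0 < R) {H : ℂ → ℂ} (hH : Continuous H)
    (h0 : ∀ z, H z ≠ 0) (hb : ∀ z, dist z x = R → H z = z - x) : False := by
  set q : ℝ × ℝ → ℂ :=
    fun p => H (x + (↑(R * p.1) : ℂ) * Complex.exp ((↑(2 * Real.pi * p.2) : ℂ) * Complex.I))
    with hq_def
  have hqc : Continuous q := by
    apply hH.comp
    apply continuous_const.add
    apply Continuous.mul
    · exact Complex.continuous_ofReal.comp (continuous_const.mul continuous_fst)
    · exact Complex.continuous_exp.comp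
        ((Complex.continuous_ofReal.comp (continuous_const.mul continuous_snd)).mul
          continuous_const)
  set sq : Set (ℝ × ℝ) := Icc (0:ℝ) 1 ×ˢ Icc (0:ℝ) 1 with hsq_def
  have hsqc : IsCompact sq := isCompact_Icc.prod isCompact_Icc
  have hsqne : sq.Nonempty := ⟨(0,0), by simp [hsq_def]⟩
  obtain ⟨p₀, hp₀sq, hp₀min⟩ :=
    hsqc.exists_isMinOn hsqne ((continuous_norm.comp hqc).continuousOn)
  set m : ℝ := ‖q p₀‖ with hm_def
  have hm : 0 < m := norm_pos_iff.mpr (h0 _)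
  have huc := hsqc.uniformContinuousOn_of_continuous hqc.continuousOn
  rw [Metric.uniformContinuousOn_iff] at huc
  obtain ⟨δ, hδ, hucd⟩ := huc m hm
  obtain ⟨n, hn⟩ := exists_nat_gt (max (1/δ) 2)
  have hn2 : (2:ℝ) ≤ n := le_of_lt ((le_max_right _ _).trans_lt hn)
  have hnpos : (0:ℝ) < n := by linarith
  have hnne : (n:ℝ) ≠ 0 := ne_of_gt hnpos
  have hstep : (1:ℝ)/n < δ := by
    rw [div_lt_iff₀ hnpos]
    have h1 : 1/δ < n := (le_max_left _ _).trans_lt hn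
    calc (1:ℝ) = δ * (1/δ) := by field_simp
    _ < δ * n := by exact mul_lt_mul_of_pos_left h1 hδ
  have hmem : ∀ s ∈ Icc (0:ℝ) 1, ∀ j : ℕ, j ≤ n → (s, (j:ℝ)/n) ∈ sq := by
    intro s hs j hj
    refine ⟨hs, ?_, ?_⟩
    · positivity
    · rw [div_le_one hnpos]
      exact_mod_cast hj
  have hlow : ∀ s ∈ Icc (0:ℝ) 1, ∀ j : ℕ, j ≤ n → m ≤ ‖q (s, (j:ℝ)/n)‖ :=
    fun s hs j hj => hp₀min (hmem s hs j hj)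
  have hclose : ∀ s ∈ Icc (0:ℝ) 1, ∀ j : ℕ, j < n →
      ‖q (s, ((j:ℝ)+1)/n) - q (s, (j:ℝ)/n)‖ < m := by
    intro s hs j hj
    have h1 : (s, ((j:ℝ)+1)/n) ∈ sq := by
      have := hmem s hs (j+1) hj
      push_cast at this ⊢
      exact this
    have h2 : (s, (j:ℝ)/n) ∈ sq := hmem s hs j hj.le
    have hd : dist ((s, ((j:ℝ)+1)/n)) ((s, (j:ℝ)/n)) < δ := by
      rw [Prod.dist_eq]
      simp only [dist_self]
      rw [Real.dist_eq]
      have : ((j:ℝ)+1)/n - (j:ℝ)/n = 1/n := by field_simp; ring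
      rw [this, abs_of_pos (by positivity)]
      rw [sup_eq_right.mpr (by positivity : (0:ℝ) ≤ 1/n)]
      exact hstep
    have := hucd _ h1 _ h2 hd
    rwa [Complex.dist_eq] at this
  -- the discrete winding number
  set D : ℝ → ℂ :=
    fun s => ∑ j ∈ Finset.range n, Complex.log (q (s, ((j:ℝ)+1)/n) / q (s, (j:ℝ)/n)) with hD_def
  have hrat : ∀ s ∈ Icc (0:ℝ) 1, ∀ j : ℕ, j < n →
      q (s, ((j:ℝ)+1)/n) / q (s, (j:ℝ)/n) ≠ 0 ∧
      0 < (q (s, ((j:ℝ)+1)/n) / q (s, (j:ℝ)/n)).re := by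
    intro s hs j hj
    exact ratio_facts (h0 _) ((hclose s hs j hj).trans_le (hlow s hs j hj.le))
  have hDcont : ContinuousOn D (Icc (0:ℝ) 1) := by
    apply continuousOn_finset_sum
    intro j hj
    rw [Finset.mem_range] at hj
    have hc1 : ContinuousOn (fun s => q (s, ((j:ℝ)+1)/n)) (Icc (0:ℝ) 1) :=
      (hqc.comp (continuous_id.prodMk continuous_const)).continuousOn
    have hc2 : ContinuousOn (fun s => q (s, (j:ℝ)/n)) (Icc (0:ℝ) 1) :=
      (hqc.comp (continuous_id.prodMk continuous_const)).continuousOn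
    apply ContinuousOn.clog
    · exact hc1.div hc2 (fun s hs => h0 _)
    · intro s hs
      exact Complex.mem_slitPlane_iff.mpr (Or.inl (hrat s hs j hj).2)
  -- q is a loop in the second variable
  have hexp1 : Complex.exp ((↑(2 * Real.pi * (1:ℝ)) : ℂ) * Complex.I) = 1 := by
    have h : (↑(2 * Real.pi * (1:ℝ)) : ℂ) * Complex.I = 2 * (Real.pi:ℂ) * Complex.I := by
      push_cast; ring
    rw [h]
    exact Complex.exp_two_pi_mul_I
  have hexp0 : Complex.exp ((↑(2 * Real.pi * (0:ℝ)) : ℂ) * Complex.I) = 1 := by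
    have h : (↑(2 * Real.pi * (0:ℝ)) : ℂ) * Complex.I = 0 := by push_cast; ring
    rw [h, Complex.exp_zero]
  have hloop : ∀ s : ℝ, q (s, ((n:ℝ))/n) = q (s, ((0:ℕ):ℝ)/n) := by
    intro s
    have h1 : ((n:ℝ))/n = 1 := div_self hnne
    have h0' : (((0:ℕ):ℝ))/n = 0 := by norm_num
    rw [h1, h0']
    simp only [hq_def]
    rw [hexp1, hexp0]
  have hexp : ∀ s ∈ Icc (0:ℝ) 1, Complex.exp (D s) = 1 := by
    intro s hs
    rw [hD_def]
    rw [Complex.exp_sum]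
    have heq : ∀ j ∈ Finset.range n,
        Complex.exp (Complex.log (q (s, ((j:ℝ)+1)/n) / q (s, (j:ℝ)/n)))
          = (fun j : ℕ => q (s, (j:ℝ)/n)) (j+1) / (fun j : ℕ => q (s, (j:ℝ)/n)) j := by
      intro j hj
      rw [Finset.mem_range] at hj
      rw [Complex.exp_log (hrat s hs j hj).1]
      push_cast
      ring_nf
    rw [Finset.prod_congr rfl heq,
      prod_div_telescope (fun j : ℕ => q (s, (j:ℝ)/n)) n (fun i _ => h0 _)]
    rw [hloop s]
    exact div_self (h0 _)
  have hint : ∀ s ∈ Icc (0:ℝ) 1, ∃ k : ℤ, D s = k * (2 * Real.pi * Complex.I) :=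
    fun s hs => Complex.exp_eq_one_iff.mp (hexp s hs)
  have hD0 : D 0 = 0 := by
    have hc : ∀ t : ℝ, q (0, t) = H x := by
      intro t
      simp only [hq_def, mul_zero]
      norm_num
    rw [hD_def]
    apply Finset.sum_eq_zero
    intro j hj
    rw [hc, hc, div_self (h0 x), Complex.log_one]
  have hD1 : D 1 = 2 * Real.pi * Complex.I := by
    have hq1 : ∀ t : ℝ, q (1, t) = (R:ℂ) * Complex.exp ((↑(2 * Real.pi * t) : ℂ) * Complex.I) := by
      intro t
      have habs : ‖(↑(R * 1) : ℂ) *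
          Complex.exp ((↑(2 * Real.pi * t) : ℂ) * Complex.I)‖ = R := by
        rw [norm_mul, Complex.norm_exp_ofReal_mul_I, mul_one, Complex.norm_real, Real.norm_eq_abs, mul_one,
          abs_of_pos hR]
      have hd : dist (x + (↑(R * 1) : ℂ) *
          Complex.exp ((↑(2 * Real.pi * t) : ℂ) * Complex.I)) x = R := by
        rw [Complex.dist_eq, add_sub_cancel_left]
        exact habs
      simp only [hq_def]
      rw [hb _ hd, add_sub_cancel_left, mul_one]
    have hterm : ∀ j : ℕ, j < n →
        Complex.log (q (1, ((j:ℝ)+1)/n) / q (1, (j:ℝ)/n))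
          = (↑(2 * Real.pi / n) : ℂ) * Complex.I := by
      intro j hj
      rw [hq1, hq1]
      have hRne : (R:ℂ) ≠ 0 := by
        simp only [ne_eq, Complex.ofReal_eq_zero]
        exact ne_of_gt hR
      rw [mul_div_mul_left _ _ hRne, ← Complex.exp_sub]
      have harg : (↑(2 * Real.pi * (((j:ℝ)+1)/n)) : ℂ) * Complex.I
          - (↑(2 * Real.pi * ((j:ℝ)/n)) : ℂ) * Complex.I
          = (↑(2 * Real.pi / n) : ℂ) * Complex.I := by
        rw [← sub_mul, ← Complex.ofReal_sub]
        congr 2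
        field_simp
        ring
      rw [harg]
      apply Complex.log_exp
      · have him' : ((↑(2 * Real.pi / n) : ℂ) * Complex.I).im = 2 * Real.pi / n := by
          simp
        rw [him']
        have : (0:ℝ) < 2 * Real.pi / n := by positivity
        linarith [Real.pi_pos]
      · have him' : ((↑(2 * Real.pi / n) : ℂ) * Complex.I).im = 2 * Real.pi / n := by
          simp
        rw [him']
        rw [div_le_iff₀ hnpos]
        nlinarith [Real.pi_pos]
    show (∑ j ∈ Finset.range n, Complex.log (q (1, ((j:ℝ)+1)/n) / q (1, (j:ℝ)/n)))
      = 2 * Real.pi * Complex.I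
    rw [Finset.sum_congr rfl (fun j hj => hterm j (Finset.mem_range.mp hj)),
      Finset.sum_const, Finset.card_range, nsmul_eq_mul]
    have : (n:ℂ) * ((↑(2 * Real.pi / n) : ℂ) * Complex.I) = 2 * (Real.pi:ℂ) * Complex.I := by
      have hcne : (n:ℂ) ≠ 0 := by exact_mod_cast hnne
      push_cast
      field_simp
    rw [this]
  -- IVT finish
  have hgc : ContinuousOn (fun s => (D s).im) (Icc (0:ℝ) 1) :=
    Complex.continuous_im.comp_continuousOn hDcont
  have hg0 : (D 0).im = 0 := by rw [hD0]; simp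
  have hg1 : (D 1).im = 2 * Real.pi := by rw [hD1]; simp
  have hmem' : Real.pi ∈ Icc ((fun s => (D s).im) 0) ((fun s => (D s).im) 1) := by
    simp only [hg0, hg1]
    constructor
    · exact Real.pi_pos.le
    · linarith [Real.pi_pos]
  obtain ⟨s, hs, hgs⟩ := intermediate_value_Icc (zero_le_one) hgc hmem'
  obtain ⟨k, hk⟩ := hint s hs
  have hgs' : (D s).im = Real.pi := hgs
  rw [hk] at hgs'
  have him : ((k:ℂ) * (2 * Real.pi * Complex.I)).im = 2 * Real.pi * k := by
    simp [Complex.mul_im]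
    ring
  rw [him] at hgs'
  have h2k : (2 * (k:ℝ)) * Real.pi = 1 * Real.pi := by linarith
  have h2k' : (2 * (k:ℝ)) = 1 := mul_right_cancel₀ Real.pi_ne_zero h2k
  have : (2 * k : ℤ) = 1 := by exact_mod_cast h2k'
  omega



/-- A continuous nonvanishing function on a closed interval has a continuous logarithm. -/
lemma exists_log_Icc {A B : ℝ} (hAB : A ≤ B) {f : ℝ → ℂ} (hf : ContinuousOn f (Icc A B))
    (h0 : ∀ t ∈ Icc A B, f t ≠ 0) :
    ∃ L : ℝ → ℂ, ContinuousOn L (Icc A B) ∧ ∀ t ∈ Icc A B, Complex.exp (L t) = f t := by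
  have hAmem : A ∈ Icc A B := ⟨le_rfl, hAB⟩
  have hne : (Icc A B).Nonempty := ⟨A, hAmem⟩
  obtain ⟨p₀, hp₀, hmin⟩ :=
    isCompact_Icc.exists_isMinOn hne (continuous_norm.comp_continuousOn hf)
  set m : ℝ := ‖f p₀‖ with hm_def
  have hm : 0 < m := norm_pos_iff.mpr (h0 _ hp₀)
  have huc := isCompact_Icc.uniformContinuousOn_of_continuous hf
  rw [Metric.uniformContinuousOn_iff] at huc
  obtain ⟨δ, hδ, hucd⟩ := huc m hm
  obtain ⟨n, hn⟩ := exists_nat_gt (max ((B - A)/δ) 1)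
  have hnpos : (0:ℝ) < n := by
    have := (le_max_right ((B - A)/δ) 1).trans_lt hn
    linarith
  have hnne : (n:ℝ) ≠ 0 := ne_of_gt hnpos
  have hBA : (0:ℝ) ≤ B - A := by linarith
  have hcnn : (0:ℝ) ≤ (B - A)/n := by positivity
  have hstep : (B - A)/n < δ := by
    rw [div_lt_iff₀ hnpos]
    have h1 : (B - A)/δ < n := (le_max_left _ _).trans_lt hn
    have h2 : B - A = δ * ((B - A)/δ) := by field_simp
    nlinarith [mul_lt_mul_of_pos_left h1 hδ]
  set st : ℕ → ℝ := fun i => A + i * ((B - A)/n) with hst_def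
  have hstA : ∀ i : ℕ, A ≤ st i := by
    intro i
    simp only [hst_def]
    have : (0:ℝ) ≤ (i:ℝ) * ((B - A)/n) := by positivity
    linarith
  have hst0 : st 0 = A := by simp [hst_def]
  have hstn : st n = B := by
    simp only [hst_def]
    field_simp
    ring
  have hstd : ∀ i : ℕ, st (i+1) = st i + (B - A)/n := by
    intro i
    simp only [hst_def]
    push_cast
    ring
  have hminmem : ∀ t ∈ Icc A B, ∀ i : ℕ, min (st i) t ∈ Icc A B := by
    intro t ht i
    exact ⟨le_min (hstA i) ht.1, (min_le_right _ _).trans ht.2⟩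
  have hdiff : ∀ t : ℝ, ∀ i : ℕ, |min (st (i+1)) t - min (st i) t| ≤ (B - A)/n := by
    intro t i
    have hab : st i ≤ st (i+1) := by
      rw [hstd i]
      linarith
    rcases le_total t (st i) with h | h
    · rw [_root_.min_eq_right h, _root_.min_eq_right (h.trans hab), sub_self, abs_zero]
      exact hcnn
    · rw [_root_.min_eq_left h]
      rcases le_total t (st (i+1)) with h' | h'
      · rw [_root_.min_eq_right h', _root_.abs_of_nonneg (by linarith)]
        rw [hstd i] at h'
        linarith
      · rw [_root_.min_eq_left h', hstd i, add_sub_cancel_left, _root_.abs_of_nonneg hcnn]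
  have hclose : ∀ t ∈ Icc A B, ∀ i : ℕ,
      ‖f (min (st (i+1)) t) - f (min (st i) t)‖ < m := by
    intro t ht i
    have hd : dist (min (st (i+1)) t) (min (st i) t) < δ := by
      rw [Real.dist_eq]
      exact (hdiff t i).trans_lt hstep
    have := hucd _ (hminmem t ht (i+1)) _ (hminmem t ht i) hd
    rwa [Complex.dist_eq] at this
  have hrat : ∀ t ∈ Icc A B, ∀ i : ℕ,
      f (min (st (i+1)) t) / f (min (st i) t) ≠ 0 ∧
      0 < (f (min (st (i+1)) t) / f (min (st i) t)).re := by
    intro t ht i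
    exact ratio_facts (h0 _ (hminmem t ht i))
      ((hclose t ht i).trans_le (hmin (hminmem t ht i)))
  refine ⟨fun t => Complex.log (f A) +
    ∑ i ∈ Finset.range n, Complex.log (f (min (st (i+1)) t) / f (min (st i) t)), ?_, ?_⟩
  · apply ContinuousOn.add continuousOn_const
    apply continuousOn_finset_sum
    intro i _
    have hc : ∀ j : ℕ, ContinuousOn (fun t => f (min (st j) t)) (Icc A B) := by
      intro j
      exact hf.comp (continuous_const.min continuous_id).continuousOn
        (fun t ht => hminmem t ht j)
    apply ContinuousOn.clog ((hc (i+1)).div (hc i) (fun t ht => h0 _ (hminmem t ht i)))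
    intro t ht
    exact Complex.mem_slitPlane_iff.mpr (Or.inl (hrat t ht i).2)
  · intro t ht
    rw [Complex.exp_add, Complex.exp_sum]
    have heq : ∀ i ∈ Finset.range n,
        Complex.exp (Complex.log (f (min (st (i+1)) t) / f (min (st i) t)))
          = (fun i : ℕ => f (min (st i) t)) (i+1) / (fun i : ℕ => f (min (st i) t)) i := by
      intro i _
      exact Complex.exp_log (hrat t ht i).1
    rw [Finset.prod_congr rfl heq,
      prod_div_telescope (fun i : ℕ => f (min (st i) t)) n
        (fun i _ => h0 _ (hminmem t ht i)),
      Complex.exp_log (h0 A hAmem)]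
    simp only [hst0, hstn]
    rw [_root_.min_eq_right ht.2, _root_.min_eq_left ht.1]
    rw [mul_comm]
    exact div_mul_cancel₀ _ (h0 A hAmem)


/-- Key topological lemma: if `K` is a closed proper subset of a Jordan curve `C = range γ`
(in `ℂ`), `x ∉ C`, and `G` is a bounded open set containing `x` whose frontier lies in `K`,
we get a contradiction. -/
lemma jordan_arc_no_bounded {γ : AddCircle (1:ℝ) → ℂ} (hγc : Continuous γ)
    (hγi : Function.Injective γ) {K G : Set ℂ}
    (hKcl : IsClosed K) (hKC : K ⊆ Set.range γ) (hKne : K ≠ Set.range γ)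
    {x : ℂ} (hxC : ∀ z ∈ Set.range γ, z ≠ x)
    (hGo : IsOpen G) (hGb : IsBounded G) (hxG : x ∈ G)
    (hfr : frontier G ⊆ K) : False := by
  classical
  haveI : Fact ((0:ℝ) < 1) := ⟨one_pos⟩
  have hssub : K ⊂ Set.range γ := hKC.ssubset_of_ne hKne
  obtain ⟨c0, hc0C, hc0K⟩ := Set.exists_of_ssubset hssub
  obtain ⟨θc, hθc⟩ := hc0C
  set a : ℝ := ((AddCircle.equivIco 1 0) θc : ℝ) with ha_def
  have haθ : ((a : ℝ) : AddCircle (1:ℝ)) = θc := (AddCircle.equivIco 1 0).symm_apply_apply θc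
  set q : ℝ → ℂ := fun t => γ ((t : ℝ) : AddCircle (1:ℝ)) with hq_def
  have hqc : Continuous q := hγc.comp (AddCircle.continuous_mk' 1)
  have hqa1 : q (a+1) = c0 := by
    simp only [hq_def]
    rw [AddCircle.coe_add_period, haθ, hθc]
  set T : Set ℝ := Icc a (a+1) ∩ q ⁻¹' K with hT_def
  have hTc : IsCompact T := isCompact_Icc.inter_right (hKcl.preimage hqc)
  have hTsub : T ⊆ Ico a (a+1) := by
    rintro t ⟨⟨h1, h2⟩, htK⟩
    refine ⟨h1, lt_of_le_of_ne h2 ?_⟩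
    rintro rfl
    exact hc0K (hqa1 ▸ htK)
  have h0 : ∀ t ∈ Icc a (a+1), q t - x ≠ 0 := fun t _ =>
    sub_ne_zero_of_ne (hxC _ ⟨_, rfl⟩)
  obtain ⟨L, hLc, hLe⟩ := exists_log_Icc (by linarith : a ≤ a+1)
    ((hqc.continuousOn).sub continuousOn_const) h0
  haveI hTcs : CompactSpace T := isCompact_iff_compactSpace.mp hTc
  -- the parametrization of K by T
  have hmemK : ∀ t : T, q (t:ℝ) ∈ K := fun t => t.2.2
  set φ : T → K := fun t => ⟨q (t:ℝ), hmemK t⟩ with hφ_def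
  have hφinj : Function.Injective φ := by
    rintro ⟨t, ht⟩ ⟨u, hu⟩ h
    have hqq : q t = q u := congrArg Subtype.val h
    have hcoe : ((t : ℝ) : AddCircle (1:ℝ)) = u := hγi hqq
    have := (AddCircle.coe_eq_coe_iff_of_mem_Ico (hTsub ht) (hTsub hu)).mp hcoe
    exact Subtype.ext this
  have hφsurj : Function.Surjective φ := by
    rintro ⟨k, hk⟩
    obtain ⟨θ, hθ⟩ := hKC hk
    set t : ℝ := ((AddCircle.equivIco 1 a) θ : ℝ) with ht_def
    have htmem : t ∈ Ico a (a+1) := ((AddCircle.equivIco 1 a) θ).2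
    have htθ : ((t:ℝ) : AddCircle (1:ℝ)) = θ := (AddCircle.equivIco 1 a).symm_apply_apply θ
    have hqt : q t = k := by
      simp only [hq_def]
      rw [htθ, hθ]
    have htT : t ∈ T := ⟨Ico_subset_Icc_self htmem, by
      simp only [Set.mem_preimage, hqt]; exact hk⟩
    exact ⟨⟨t, htT⟩, Subtype.ext hqt⟩
  set E : T ≃ K := Equiv.ofBijective φ ⟨hφinj, hφsurj⟩ with hE_def
  have hEc : Continuous (E : T → K) :=
    Continuous.subtype_mk (hqc.comp continuous_subtype_val) _
  set e : T ≃ₜ K := hEc.homeoOfEquivCompactToT2 with he_def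
  -- continuous log on K
  set F : C(K, ℂ) := ⟨fun k => L ((e.symm k : T) : ℝ), by
    apply hLc.comp_continuous (continuous_subtype_val.comp e.symm.continuous)
    intro k
    exact ((e.symm k).2.1 : ((e.symm k : T) : ℝ) ∈ Icc a (a+1))⟩ with hF_def
  have hFk : ∀ k : K, Complex.exp (F k) = (k:ℂ) - x := by
    intro k
    have h1 : Complex.exp (L ((e.symm k : T) : ℝ)) = q ((e.symm k : T) : ℝ) - x :=
      hLe _ (e.symm k).2.1
    have h2 : q ((e.symm k : T) : ℝ) = (k:ℂ) := by
      have := e.apply_symm_apply k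
      exact congrArg Subtype.val this
    simpa [hF_def, h2] using h1
  -- Tietze extension
  obtain ⟨Fb, hFb⟩ := ContinuousMap.exists_restrict_eq hKcl F
  have hFbk : ∀ z (hz : z ∈ K), Complex.exp (Fb z) = z - x := by
    intro z hz
    have := DFunLike.congr_fun hFb ⟨z, hz⟩
    rw [ContinuousMap.restrict_apply] at this
    rw [this]
    exact hFk ⟨z, hz⟩
  -- the global nonvanishing map
  set H : ℂ → ℂ := (closure G).piecewise (fun z => Complex.exp (Fb z)) (fun z => z - x)
    with hH_def
  have hHc : Continuous H := by
    apply Continuous.piecewise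
    · intro z hz
      have hzK : z ∈ K := hfr (frontier_closure_subset hz)
      exact hFbk z hzK
    · exact Complex.continuous_exp.comp Fb.continuous
    · exact continuous_id.sub continuous_const
  have hH0 : ∀ z, H z ≠ 0 := by
    intro z
    by_cases hz : z ∈ closure G
    · rw [hH_def, Set.piecewise_eq_of_mem _ _ _ hz]
      exact Complex.exp_ne_zero _
    · rw [hH_def, Set.piecewise_eq_of_notMem _ _ _ hz]
      exact sub_ne_zero_of_ne (fun h => hz (h ▸ subset_closure hxG))
  obtain ⟨r, hr⟩ := hGb.closure.subset_closedBall x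
  have hball : closure G ⊆ closedBall x (max r 0) :=
    hr.trans (closedBall_subset_closedBall (le_max_left _ _))
  set R : ℝ := max r 0 + 1 with hR_def
  have hRpos : (0:ℝ) < R := by
    have : (0:ℝ) ≤ max r 0 := le_max_right _ _
    linarith
  have hb' : ∀ z, dist z x = R → H z = z - x := by
    intro z hz
    have hznot : z ∉ closure G := by
      intro hmem
      have := hball hmem
      rw [mem_closedBall] at this
      rw [hz] at this
      linarith [hR_def ▸ this]
    rw [hH_def, Set.piecewise_eq_of_notMem _ _ _ hznot]
  exact no_winding hRpos hHc hH0 hb'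



/-- A preconnected set missing the frontier of an open set `U`, but meeting `U`,
is contained in `U`. -/
lemma conn_subset {α : Type*} [TopologicalSpace α] {U V : Set α}
    (hUo : IsOpen U) (hVp : IsPreconnected V) (hVC : Disjoint V (frontier U))
    (hne : (V ∩ U).Nonempty) : V ⊆ U := by
  have hsub : V ⊆ U ∪ (closure U)ᶜ := by
    intro z hz
    by_cases hcl : z ∈ closure U
    · rcases (closure_eq_self_union_frontier U ▸ hcl) with h | h
      · exact Or.inl h
      · exact absurd h (Set.disjoint_left.mp hVC hz)
    · exact Or.inr hcl
  exact IsPreconnected.subset_left_of_subset_union hUo isClosed_closure.isOpen_compl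
    (disjoint_compl_right.mono_left subset_closure) hsub hne hVp

end SeifertAux

/-- let `S` be a finite family of simple closed curves `curve i`
with bounded complementary components `b i` (nonempty, open, bounded, with
frontier the curve, disjoint from the curve), pairwise non-crossing: for
distinct `s t ∈ S`, if `curve t` meets `b s` then `curve t ⊆ b s ∪ curve s`.
Then the `b s`, `s ∈ S`, are pairwise disjoint iff
`S_II = {s ∈ S | ∃ t ∈ S, b t ⊊ b s}` is empty. -/
theorem seifert_disks_disjoint_iff_SII_empty
    {ι : Type*} (S : Finset ι) (curve b : ι → Set (ℝ × ℝ))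
    (hscc : ∀ i ∈ S, SimpleClosedCurve (curve i))
    (hb : ∀ i ∈ S, (b i).Nonempty ∧ IsOpen (b i) ∧ Bornology.IsBounded (b i) ∧
      IsConnected (b i) ∧ frontier (b i) = curve i ∧ Disjoint (b i) (curve i))
    (hdistinct : ∀ i ∈ S, ∀ j ∈ S, i ≠ j → curve i ≠ curve j)
    (hnocross : ∀ s ∈ S, ∀ t ∈ S, s ≠ t →
      (curve t ∩ b s).Nonempty → curve t ⊆ b s ∪ curve s) :
    (∀ s ∈ S, ∀ t ∈ S, s ≠ t → Disjoint (b s) (b t)) ↔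
      ¬ ∃ s ∈ S, ∃ t ∈ S, b t ⊂ b s := by
  classical
  constructor
  · rintro hdisj ⟨s, hs, t, ht, hsub⟩
    rcases eq_or_ne s t with rfl | hst
    · exact lt_irrefl _ hsub
    · obtain ⟨y, hy⟩ := (hb t ht).1
      exact Set.disjoint_left.mp (hdisj s hs t ht hst) (hsub.subset hy) hy
  · intro hno s hs t ht hst
    obtain ⟨hUne, hUo, hUb, hUconn, hUfr, hUdisj⟩ := hb s hs
    obtain ⟨hVne, hVo, hVb, hVconn, hVfr, hVdisj⟩ := hb t ht
    by_contra hnd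
    obtain ⟨x0, hx0s, hx0t⟩ := Set.not_disjoint_iff.mp hnd
    by_cases h2 : (curve s ∩ b t).Nonempty
    · by_cases h1 : (curve t ∩ b s).Nonempty
      · -- the impossible "mutual crossing" configuration
        have hDsub : curve t ⊆ b s ∪ curve s := hnocross s hs t ht hst h1
        have hCsub : curve s ⊆ b t ∪ curve t := hnocross t ht s hs hst.symm h2
        set G : Set (ℝ × ℝ) := b s ∪ b t with hG_def
        have hGo : IsOpen G := hUo.union hVo
        have hGb : IsBounded G := hUb.union hVb
        have hGfr : frontier G ⊆ curve s ∩ curve t := by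
          intro w hw
          have hw' : w ∈ closure G \ G := hGo.frontier_eq ▸ hw
          have hwG : w ∉ G := hw'.2
          have hwU : w ∉ b s := fun h => hwG (Or.inl h)
          have hwV : w ∉ b t := fun h => hwG (Or.inr h)
          have hwcl : w ∈ closure (b s) ∪ closure (b t) := by
            rw [← closure_union]
            exact hw'.1
          have hclU : closure (b s) ⊆ b s ∪ curve s := by
            rw [closure_eq_self_union_frontier, hUfr]
          have hclV : closure (b t) ⊆ b t ∪ curve t := by
            rw [closure_eq_self_union_frontier, hVfr]
          rcases hwcl with h | h
          · have hwC : w ∈ curve s := (hclU h).resolve_left hwU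
            have hwD : w ∈ curve t := (hCsub hwC).resolve_left hwV
            exact ⟨hwC, hwD⟩
          · have hwD : w ∈ curve t := (hclV h).resolve_left hwV
            have hwC : w ∈ curve s := (hDsub hwD).resolve_left hwU
            exact ⟨hwC, hwD⟩
        obtain ⟨c0, hc0C, hc0V⟩ := h2
        have hc0K : c0 ∉ curve s ∩ curve t := fun h =>
          Set.disjoint_left.mp hVdisj hc0V h.2
        obtain ⟨γ, hγc, hγi, hγr⟩ := hscc s hs
        set eh : (ℝ × ℝ) ≃ₜ ℂ := Complex.equivRealProdCLM.symm.toHomeomorph with heh_def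
        have hrange : Set.range (⇑eh ∘ γ) = eh '' curve s := by
          rw [Set.range_comp, hγr]
        refine SeifertAux.jordan_arc_no_bounded
          (γ := ⇑eh ∘ γ) (eh.continuous.comp hγc) (eh.injective.comp hγi)
          (K := eh '' (curve s ∩ curve t)) (G := eh '' G) (x := eh x0)
          ?_ ?_ ?_ ?_ ?_ ?_ ?_ ?_
        · exact (eh.isClosedMap _ (by
            rw [← hUfr, ← hVfr]
            exact isClosed_frontier.inter isClosed_frontier))
        · rw [hrange]
          exact Set.image_mono Set.inter_subset_left
        · rw [hrange]
          intro h
          have : curve s ∩ curve t = curve s := (Set.image_injective.mpr eh.injective) h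
          exact hc0K (by rw [this]; exact hc0C)
        · rintro z ⟨θ, rfl⟩
          have hmem : γ θ ∈ curve s := hγr ▸ Set.mem_range_self θ
          have : γ θ ≠ x0 := fun h => Set.disjoint_left.mp hUdisj hx0s (h ▸ hmem)
          exact fun hcontra => this (eh.injective hcontra)
        · exact eh.isOpenMap _ hGo
        · exact (Complex.equivRealProdCLM.symm : (ℝ × ℝ) →L[ℝ] ℂ).lipschitz.isBounded_image hGb
        · exact Set.mem_image_of_mem _ (Or.inl hx0s)
        · rw [← Homeomorph.image_frontier]
          exact Set.image_mono hGfr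
      · -- `b s` misses `curve t`, hence `b s ⊆ b t`
        have hdisjf : Disjoint (b s) (frontier (b t)) := by
          rw [hVfr, Set.disjoint_right]
          intro z hz hzU
          exact h1 ⟨z, hz, hzU⟩
        have hsubUV : b s ⊆ b t :=
          SeifertAux.conn_subset hVo hUconn.isPreconnected hdisjf ⟨x0, hx0s, hx0t⟩
        have hneq : b s ≠ b t := fun h =>
          hdistinct s hs t ht hst (by rw [← hUfr, ← hVfr, h])
        exact hno ⟨t, ht, s, hs, Set.ssubset_iff_subset_ne.mpr ⟨hsubUV, hneq⟩⟩
    · -- `b t` misses `curve s`, hence `b t ⊆ b s`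
      have hdisjf : Disjoint (b t) (frontier (b s)) := by
        rw [hUfr, Set.disjoint_right]
        intro z hz hzV
        exact h2 ⟨z, hz, hzV⟩
      have hsubVU : b t ⊆ b s :=
        SeifertAux.conn_subset hUo hVconn.isPreconnected hdisjf ⟨x0, hx0t, hx0s⟩
      have hneq : b t ≠ b s := fun h =>
        hdistinct s hs t ht hst (by rw [← hUfr, ← hVfr, h])
      exact hno ⟨s, hs, t, ht, Set.ssubset_iff_subset_ne.mpr ⟨hsubVU, hneq⟩⟩
end
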